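/- An R-module M is dual Baer (i.e., for every submodule N ≤ M, the right ideal Hom_R(M,N) of End_R(M) is generated by an idempotent) if and only if every short exact sequence 0 → X → M → Y → 0 of R-modules with X generated by M splits. -/

import Mathlib

universe u v

/-- `M` is a dual Baer module: for every submodule `N` of `M`, the right ideal
`Hom_R(M,N)` of `End_R(M)` is generated by an idempotent. -/
def IsDualBaerModule (R : Type u) [Ring R] (M : Type v) [AddCommGroup M]
    [Module R M] : Prop :=
  ∀ N : Submodule R M, ∃ e : Module.End R M, IsIdempotentElem e ∧
    {f : Module.End R M | LinearMap.range f ≤ N} = Set.range fun s => e * s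

/-- `X` is generated by `M`: `X` is a homomorphic image of a direct sum of copies of `M`. -/
def GeneratedBy (R : Type u) [Ring R] (M : Type v) [AddCommGroup M] [Module R M]
    (X : Type v) [AddCommGroup X] [Module R X] : Prop :=
  ∃ (ι : Type v) (f : (ι →₀ M) →ₗ[R] X), Function.Surjective f

theorem stmt1 (R : Type u) [Ring R] (M : Type v) [AddCommGroup M] [Module R M] :
    IsDualBaerModule R M ↔
      ∀ (X Y : Type v) [AddCommGroup X] [Module R X] [AddCommGroup Y] [Module R Y]
        (i : X →ₗ[R] M) (g : M →ₗ[R] Y),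
        Function.Injective i → Function.Surjective g →
        LinearMap.range i = LinearMap.ker g →
        GeneratedBy R M X →
        ∃ h : Y →ₗ[R] M, g.comp h = LinearMap.id := by
  constructor
  · -- forward direction
    intro hdb X Y _ _ _ _ i g hi hg hexact hgen
    obtain ⟨e, he, hs⟩ := hdb (LinearMap.ker g)
    obtain ⟨ι, f0, hf0⟩ := hgen
    -- range e ≤ ker g
    have hre : LinearMap.range e ≤ LinearMap.ker g := by
      have : e ∈ {f : Module.End R M | LinearMap.range f ≤ LinearMap.ker g} := by
        rw [hs]; exact ⟨1, mul_one e⟩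
      exact this
    -- ker g ≤ range e
    have hkey : ∀ w : ι →₀ M, i (f0 w) ∈ LinearMap.range e := by
      intro w
      induction w using Finsupp.induction with
      | zero => simp
      | single_add a b w _ _ ih =>
        rw [map_add, map_add]
        refine add_mem ?_ ih
        set φ : Module.End R M := i ∘ₗ f0 ∘ₗ Finsupp.lsingle a with hφ
        have hφmem : φ ∈ {f : Module.End R M | LinearMap.range f ≤ LinearMap.ker g} := by
          show LinearMap.range φ ≤ LinearMap.ker g
          rw [← hexact]
          exact LinearMap.range_comp_le_range _ _
        rw [hs] at hφmem
        obtain ⟨s, hsφ⟩ := hφmem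
        have : i (f0 (Finsupp.single a b)) = φ b := rfl
        rw [this, ← hsφ]
        exact ⟨s b, rfl⟩
    have hker : LinearMap.ker g ≤ LinearMap.range e := by
      intro x hx
      have : x ∈ LinearMap.range i := by rw [hexact]; exact hx
      obtain ⟨x', rfl⟩ := this
      obtain ⟨w, rfl⟩ := hf0 x'
      exact hkey w
    have heq : LinearMap.range e = LinearMap.ker g := le_antisymm hre hker
    -- build the splitting
    have hliftker : LinearMap.ker g ≤ LinearMap.ker ((LinearMap.id : M →ₗ[R] M) - e) := by
      intro x hx
      rw [← heq] at hx
      obtain ⟨z, rfl⟩ := hx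
      have : e (e z) = e z := LinearMap.congr_fun he z
      simp [LinearMap.sub_apply, this]
    set q : (M ⧸ LinearMap.ker g) →ₗ[R] M :=
      (LinearMap.ker g).liftQ ((LinearMap.id : M →ₗ[R] M) - e) hliftker with hq
    set Eq := g.quotKerEquivOfSurjective hg with hEq
    refine ⟨q ∘ₗ (Eq.symm : Y →ₗ[R] M ⧸ LinearMap.ker g), ?_⟩
    ext y
    obtain ⟨x, rfl⟩ := hg y
    have h1 : Eq.symm (g x) = Submodule.Quotient.mk x := by
      rw [LinearEquiv.symm_apply_eq, hEq]
      simp [LinearMap.quotKerEquivOfSurjective]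
    have h2 : e x ∈ LinearMap.ker g := hre ⟨x, rfl⟩
    simp only [LinearMap.comp_apply, LinearEquiv.coe_coe, h1, LinearMap.id_apply]
    rw [hq]
    have : (LinearMap.ker g).liftQ ((LinearMap.id : M →ₗ[R] M) - e) hliftker
        (Submodule.Quotient.mk x) = x - e x := by
      rw [Submodule.liftQ_apply]; simp
    rw [this, map_sub, LinearMap.mem_ker.mp h2, sub_zero]
  · -- backward direction
    intro H N
    set T : Submodule R M :=
      ⨆ j : {f : Module.End R M // LinearMap.range f ≤ N}, LinearMap.range (j : Module.End R M)
      with hT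
    have hTN : T ≤ N := iSup_le fun j => j.2
    have hle : ∀ j : {f : Module.End R M // LinearMap.range f ≤ N},
        LinearMap.range (j : Module.End R M) ≤ T :=
      fun j => le_iSup (fun j : {f : Module.End R M // LinearMap.range f ≤ N} =>
        LinearMap.range (j : Module.End R M)) j
    -- T is generated by M
    set F' : ({f : Module.End R M // LinearMap.range f ≤ N} →₀ M) →ₗ[R] M :=
      Finsupp.lsum ℕ (fun j => (j : Module.End R M)) with hF'
    have hF'T : ∀ w, F' w ∈ T := by
      intro w
      induction w using Finsupp.induction with
      | zero => simp
      | single_add a b w _ _ ih =>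
        rw [map_add]
        exact add_mem (by rw [hF', Finsupp.lsum_single]; exact hle a ⟨b, rfl⟩) ih
    set Fc : ({f : Module.End R M // LinearMap.range f ≤ N} →₀ M) →ₗ[R] T :=
      F'.codRestrict T hF'T with hFc
    have hgen : GeneratedBy R M T := by
      refine ⟨_, Fc, ?_⟩
      rintro ⟨t, ht⟩
      have : t ∈ ⨆ j : {f : Module.End R M // LinearMap.range f ≤ N},
          LinearMap.range (j : Module.End R M) := ht
      have hsub : T ≤ LinearMap.range F' := by
        refine iSup_le fun j => ?_
        rintro x ⟨m, rfl⟩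
        exact ⟨Finsupp.single j m, by rw [hF', Finsupp.lsum_single]⟩
      obtain ⟨w, hw⟩ := hsub ht
      exact ⟨w, Subtype.ext hw⟩
    obtain ⟨h, hcomp⟩ := H T (M ⧸ T) T.subtype T.mkQ (Submodule.injective_subtype T)
      (Submodule.mkQ_surjective T) (by rw [Submodule.range_subtype, Submodule.ker_mkQ]) hgen
    have hmk : ∀ y, T.mkQ (h y) = y := fun y => LinearMap.congr_fun hcomp y
    set e : Module.End R M := LinearMap.id - h ∘ₗ T.mkQ with hedef
    have he_apply : ∀ x, e x = x - h (T.mkQ x) := fun x => rfl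
    have hreT : ∀ x, e x ∈ T := by
      intro x
      have : T.mkQ (e x) = 0 := by
        rw [he_apply, map_sub, hmk, sub_self]
      rw [← Submodule.ker_mkQ T]
      exact LinearMap.mem_ker.mpr this
    have hmkQe : ∀ x, T.mkQ (e x) = 0 := fun x => by
      have := hreT x
      rwa [← Submodule.ker_mkQ T, LinearMap.mem_ker] at this
    have hidem : IsIdempotentElem e := by
      refine LinearMap.ext fun x => ?_
      show e (e x) = e x
      rw [he_apply (e x), hmkQe, map_zero, sub_zero]
    refine ⟨e, hidem, ?_⟩
    ext f
    simp only [Set.mem_setOf_eq, Set.mem_range]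
    constructor
    · intro hf
      refine ⟨f, LinearMap.ext fun x => ?_⟩
      show e (f x) = f x
      have hfx : f x ∈ T := hle ⟨f, hf⟩ ⟨x, rfl⟩
      have : T.mkQ (f x) = 0 := by
        rw [Submodule.mkQ_apply, Submodule.Quotient.mk_eq_zero]; exact hfx
      rw [he_apply, this, map_zero, sub_zero]
    · rintro ⟨s, rfl⟩
      rintro x ⟨m, rfl⟩
      exact hTN (hreT (s m))
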